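/- For every natural number n ≥ 1, it is not the case that G_{n+1} ⊲ P_{n−1}(G_{n−1}). -/

import Mathlib

universe u

/-- Combinatorial games over a poset `A` of atoms: either an atomic game `[a]` for an atom
`a : A`, or a composite game `⟨L|R⟩` where `L` and `R` are nonempty families of games
(the left and right options). -/
inductive PoGame (A : Type u) : Type (u + 1) where
  | atom : A → PoGame A
  | mk : (xl xr : Type u) → (xl → PoGame A) → (xr → PoGame A) →
      Nonempty xl → Nonempty xr → PoGame A

/-- The type of pre-games (as formerly in Mathlib's `SetTheory.PGame`). -/
inductive SetTheory.PGame : Type (u + 1)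
  | mk : ∀ α β : Type u, (α → SetTheory.PGame) → (β → SetTheory.PGame) → SetTheory.PGame

/-- The pre-game `0 = { | }` (as formerly in Mathlib). -/
instance SetTheory.PGame.instZero : Zero SetTheory.PGame :=
  ⟨⟨PEmpty, PEmpty, PEmpty.elim, PEmpty.elim⟩⟩

namespace PoGame

variable {A : Type u}

/-- `G` is an atomic game. -/
def IsAtomic : PoGame A → Prop
  | atom _ => True
  | mk _ _ _ _ _ _ => False

/-- `G` is a left option of the game given as second argument. -/
def IsLeftOption (G : PoGame A) : PoGame A → Prop
  | atom _ => False
  | mk _ _ L _ _ _ => ∃ i, L i = G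

/-- `G` is a right option of the game given as second argument. -/
def IsRightOption (G : PoGame A) : PoGame A → Prop
  | atom _ => False
  | mk _ _ _ R _ _ => ∃ j, R j = G

section Order

variable [PartialOrder A]

mutual
  /-- `Le G H` is the relation `G ≤ H` on games over the poset `A`, defined by mutual
  recursion with `Lf` (the relation `G ⊲ H`): `G ≤ H` iff every left option `G^L`
  satisfies `G^L ⊲ H`, every right option `H^R` satisfies `G ⊲ H^R`, and if `G` or `H`
  is atomic then `G ⊲ H`. -/
  inductive Le : PoGame A → PoGame A → Prop
    | intro (G H : PoGame A)
        (hL : ∀ G', IsLeftOption G' G → Lf G' H)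
        (hR : ∀ H', IsRightOption H' H → Lf G H')
        (hA : IsAtomic G ∨ IsAtomic H → Lf G H) : Le G H

  /-- `Lf G H` is the relation `G ⊲ H` on games over the poset `A`: it holds iff some
  right option `G^R` satisfies `G^R ≤ H`, or some left option `H^L` satisfies `G ≤ H^L`,
  or `G = [a]` and `H = [b]` are atomic with `a ≤ b` in `A`. -/
  inductive Lf : PoGame A → PoGame A → Prop
    | rightOption (G H G' : PoGame A) (h : IsRightOption G' G) (hle : Le G' H) : Lf G H
    | leftOption (G H H' : PoGame A) (h : IsLeftOption H' H) (hle : Le G H') : Lf G H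
    | atom (a b : A) (hab : a ≤ b) : Lf (atom a) (atom b)
end

/-- Two games are equivalent if `G ≤ H` and `H ≤ G`. -/
def GEquiv (G H : PoGame A) : Prop := Le G H ∧ Le H G

/-- `G` is locally monotone if `G ≤ G^L` for every left option `G^L` and `G^R ≤ G` for
every right option `G^R`. -/
def LocallyMonotone (G : PoGame A) : Prop :=
  (∀ G', IsLeftOption G' G → Le G G') ∧ (∀ G', IsRightOption G' G → Le G' G)

/-- `G` is an option (left or right) of `H`. -/
def IsOption (G H : PoGame A) : Prop := IsLeftOption G H ∨ IsRightOption G H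

/-- `G` is a position of `H`: `H` itself, an option of `H`, an option of an option, etc. -/
def IsPosition (G H : PoGame A) : Prop := Relation.ReflTransGen IsOption G H

/-- `G` is monotone if every position of `G` is locally monotone. -/
def Monotone (G : PoGame A) : Prop := ∀ K, IsPosition K G → LocallyMonotone K

end Order

/-- The 5-element linearly ordered set `L5 = {-3, -2, -1, 0, 1}`. -/
abbrev L5 : Type := {a : ℤ // -3 ≤ a ∧ a ≤ 1}

/-- `G` has mean `C`: an atomic game `[a]` has mean `a`, and a composite game has mean `C`
iff every left option has mean `C + 1` and every right option has mean `C - 1`. -/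
def HasMean : PoGame L5 → ℤ → Prop
  | atom a, C => (a : ℤ) = C
  | mk _ _ L R _ _, C => (∀ i, HasMean (L i) (C + 1)) ∧ (∀ j, HasMean (R j) (C - 1))

/-- The game `⟨G | H⟩` with a single left option `G` and a single right option `H`. -/
def ofPair (G H : PoGame A) : PoGame A :=
  mk PUnit PUnit (fun _ => G) (fun _ => H) ⟨PUnit.unit⟩ ⟨PUnit.unit⟩

/-- `⋆ = ⟨-1 | -3⟩`. -/
def star : PoGame L5 := ofPair (atom ⟨-1, by norm_num⟩) (atom ⟨-3, by norm_num⟩)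

/-- `M(G) = ⟨1 | G⟩`. -/
def M (G : PoGame L5) : PoGame L5 := ofPair (atom ⟨1, by norm_num⟩) G

/-- `P(G) = ⟨G | -2⟩`. -/
def P (G : PoGame L5) : PoGame L5 := ofPair G (atom ⟨-2, by norm_num⟩)

/-- `P⋆(G) = ⟨G | ⋆⟩`. -/
def Pstar (G : PoGame L5) : PoGame L5 := ofPair G star

/-- `Pn n G = P G` if `n` is odd, `P⋆ G` if `n` is even. -/
def Pn (n : ℕ) (G : PoGame L5) : PoGame L5 := if Odd n then P G else Pstar G

/-- The sequence `G_0 = [0]`, `G_{n+1} = M (Pn n (G_n))`. -/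
def Gseq : ℕ → PoGame L5
  | 0 => atom ⟨0, by norm_num⟩
  | n + 1 => M (Pn n (Gseq n))

/-- The normal-play game obtained from a game over `L5` by replacing every atom by the
normal-play game `0 = { | }`, keeping the tree of left and right options. -/
def np : PoGame L5 → SetTheory.PGame.{0}
  | atom _ => 0
  | mk xl xr L R _ _ => SetTheory.PGame.mk xl xr (fun i => np (L i)) (fun j => np (R j))

end PoGame

namespace SetTheory
namespace PGame

abbrev LeftMoves : PGame.{u} → Type u
  | mk l _ _ _ => l

abbrev RightMoves : PGame.{u} → Type u
  | mk _ r _ _ => r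

def moveLeft : (x : PGame.{u}) → LeftMoves x → PGame.{u}
  | mk _ _ L _ => L

def moveRight : (x : PGame.{u}) → RightMoves x → PGame.{u}
  | mk _ _ _ R => R

@[simp] theorem moveLeft_mk {xl xr : Type u} {xL : xl → PGame.{u}} {xR : xr → PGame.{u}} {i : (mk xl xr xL xR).LeftMoves} :
    (mk xl xr xL xR).moveLeft i = xL i := rfl

@[simp] theorem moveRight_mk {xl xr : Type u} {xL : xl → PGame.{u}} {xR : xr → PGame.{u}} {j : (mk xl xr xL xR).RightMoves} :
    (mk xl xr xL xR).moveRight j = xR j := rfl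

def leLfAux (xl xr : Type u) (ihL : xl → PGame.{u} → Prop × Prop)
    (ihR : xr → PGame.{u} → Prop × Prop) : PGame.{u} → Prop × Prop
  | mk yl yr yL yR =>
    ((∀ i, (ihL i (mk yl yr yL yR)).2) ∧ ∀ j, (leLfAux xl xr ihL ihR (yR j)).2,
     (∃ i, (leLfAux xl xr ihL ihR (yL i)).1) ∨ ∃ j, (ihR j (mk yl yr yL yR)).1)

def leLf : PGame.{u} → PGame.{u} → Prop × Prop
  | mk xl xr xL xR => leLfAux xl xr (fun i => leLf (xL i)) (fun j => leLf (xR j))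

theorem leLf_fst (x y : PGame.{u}) : (leLf x y).1 ↔
    (∀ i, (leLf (x.moveLeft i) y).2) ∧ ∀ j, (leLf x (y.moveRight j)).2 := by
  cases x; cases y; exact Iff.rfl

theorem leLf_snd (x y : PGame.{u}) : (leLf x y).2 ↔
    (∃ i, (leLf x (y.moveLeft i)).1) ∨ ∃ j, (leLf (x.moveRight j) y).1 := by
  cases x; cases y; exact Iff.rfl

theorem lf_aux : ∀ x y : PGame.{u},
    ((leLf x y).2 ↔ ¬ (leLf y x).1) ∧ ((leLf y x).2 ↔ ¬ (leLf x y).1) := by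
  intro x
  induction x with
  | mk xl xr xL xR IHl IHr =>
    intro y
    induction y with
    | mk yl yr yL yR JHl JHr =>
      constructor
      · rw [leLf_snd (mk xl xr xL xR) (mk yl yr yL yR), leLf_fst (mk yl yr yL yR) (mk xl xr xL xR)]
        simp only [moveLeft_mk, moveRight_mk, not_and_or, not_forall]
        refine or_congr (exists_congr fun i => ?_) (exists_congr fun j => ?_)
        · rw [(JHl i).2, not_not]
        · rw [(IHr j (mk yl yr yL yR)).2, not_not]
      · rw [leLf_snd (mk yl yr yL yR) (mk xl xr xL xR), leLf_fst (mk xl xr xL xR) (mk yl yr yL yR)]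
        simp only [moveLeft_mk, moveRight_mk, not_and_or, not_forall]
        refine or_congr (exists_congr fun i => ?_) (exists_congr fun j => ?_)
        · rw [(IHl i (mk yl yr yL yR)).1, not_not]
        · rw [(JHr j).1, not_not]

instance instLEPGame : LE PGame.{u} := ⟨fun x y => (leLf x y).1⟩

def LF (x y : PGame.{u}) : Prop := ¬ y ≤ x

end PGame
end SetTheory

infix:50 " ⧏ " => SetTheory.PGame.LF

namespace SetTheory
namespace PGame

theorem le_iff_forall_lf {x y : PGame.{u}} :
    x ≤ y ↔ (∀ i, x.moveLeft i ⧏ y) ∧ ∀ j, x ⧏ y.moveRight j := by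
  show (leLf x y).1 ↔ _
  rw [leLf_fst]
  exact and_congr (forall_congr' fun i => (lf_aux _ _).1) (forall_congr' fun j => (lf_aux _ _).1)

theorem lf_iff_exists_le {x y : PGame.{u}} :
    x ⧏ y ↔ (∃ i, x ≤ y.moveLeft i) ∨ ∃ j, x.moveRight j ≤ y := by
  show ¬ (leLf y x).1 ↔ _
  rw [← (lf_aux x y).1, leLf_snd]
  exact Iff.rfl

theorem zero_le_lf {x : PGame.{u}} : 0 ≤ x ↔ ∀ j, 0 ⧏ x.moveRight j := by
  rw [le_iff_forall_lf]
  exact ⟨fun h => h.2, fun h => ⟨fun i => PEmpty.elim i, h⟩⟩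

theorem le_of_forall_lf' {x y : PGame.{u}} (h1 : ∀ i, x.moveLeft i ⧏ y)
    (h2 : ∀ j, x ⧏ y.moveRight j) : x ≤ y := le_iff_forall_lf.2 ⟨h1, h2⟩

theorem lf_of_le_moveLeft' {x y : PGame.{u}} (i : y.LeftMoves) (h : x ≤ y.moveLeft i) : x ⧏ y :=
  lf_iff_exists_le.2 (Or.inl ⟨i, h⟩)

theorem lf_of_moveRight_le' {x y : PGame.{u}} (j : x.RightMoves) (h : x.moveRight j ≤ y) : x ⧏ y :=
  lf_iff_exists_le.2 (Or.inr ⟨j, h⟩)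

theorem moveLeft_lf_of_le' {x y : PGame.{u}} (h : x ≤ y) (i : x.LeftMoves) : x.moveLeft i ⧏ y :=
  (le_iff_forall_lf.1 h).1 i

theorem lf_moveRight_of_le' {x y : PGame.{u}} (h : x ≤ y) (j : y.RightMoves) : x ⧏ y.moveRight j :=
  (le_iff_forall_lf.1 h).2 j

theorem le_refl_aux (x : PGame.{u}) : x ≤ x := by
  induction x with
  | mk _ _ xL xR IHl IHr =>
    exact le_of_forall_lf' (fun i => lf_of_le_moveLeft' i (IHl i))
      (fun j => lf_of_moveRight_le' j (IHr j))

theorem le_trans_aux' {x y z : PGame.{u}}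
    (h₁ : ∀ {i}, y ≤ z → z ≤ x.moveLeft i → y ≤ x.moveLeft i)
    (h₂ : ∀ {j}, z.moveRight j ≤ x → x ≤ y → z.moveRight j ≤ y) (hxy : x ≤ y) (hyz : y ≤ z) :
    x ≤ z :=
  le_of_forall_lf' (fun i h => moveLeft_lf_of_le' hxy i (h₁ hyz h))
    fun j h => lf_moveRight_of_le' hyz j (h₂ h hxy)

theorem le_trans_all : ∀ x y z : PGame.{u},
    (x ≤ y → y ≤ z → x ≤ z) ∧ (y ≤ z → z ≤ x → y ≤ x) ∧ (z ≤ x → x ≤ y → z ≤ y) := by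
  intro x
  induction x with
  | mk xl xr xL xR IHxl IHxr =>
    intro y
    induction y with
    | mk yl yr yL yR IHyl IHyr =>
      intro z
      induction z with
      | mk zl zr zL zR IHzl IHzr =>
        exact ⟨le_trans_aux' (fun {i} => (IHxl i (mk yl yr yL yR) (mk zl zr zL zR)).2.1)
                 fun {j} => (IHzr j).2.2,
               le_trans_aux' (fun {i} => (IHyl i (mk zl zr zL zR)).2.2)
                 fun {j} => (IHxr j (mk yl yr yL yR) (mk zl zr zL zR)).1,
               le_trans_aux' (fun {i} => (IHzl i).1) fun {j} => (IHyr j (mk zl zr zL zR)).2.1⟩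

instance instPreorderPGame : Preorder PGame.{u} :=
  { instLEPGame with
    le_refl := le_refl_aux
    le_trans := fun x y z => (le_trans_all x y z).1 }

end PGame
end SetTheory

open SetTheory

namespace PoGame

/-! ### Inversion for `Lf` between atoms -/

theorem lf_atom_atom {a b : L5} (h : Lf (atom a) (atom b)) : a ≤ b := by
  cases h with
  | rightOption _ _ G' h' _ => exact False.elim h'
  | leftOption _ _ H' h' _ => exact False.elim h'
  | atom _ _ hab => exact hab

/-! ### Means -/

theorem hasMean_star : HasMean star (-2) := by
  refine ⟨fun _ => ?_, fun _ => ?_⟩ <;> simp [HasMean]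

theorem hasMean_Pn {G : PoGame L5} (h : HasMean G 0) (n : ℕ) :
    HasMean (Pn n G) (-1) := by
  have e1 : (-1 : ℤ) + 1 = 0 := by norm_num
  by_cases hodd : Odd n
  · rw [show Pn n G = P G from if_pos hodd]
    refine ⟨fun _ => ?_, fun _ => ?_⟩
    · rw [show HasMean G (-1+1) = HasMean G 0 from by rw [e1]]; exact h
    · simp [HasMean]
  · rw [show Pn n G = Pstar G from if_neg hodd]
    refine ⟨fun _ => ?_, fun _ => ?_⟩
    · rw [show HasMean G (-1+1) = HasMean G 0 from by rw [e1]]; exact h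
    · rw [show HasMean star (-1-1) = HasMean star (-2) from by norm_num]
      exact hasMean_star

theorem hasMean_Gseq : ∀ n, HasMean (Gseq n) 0
  | 0 => by simp [Gseq, HasMean]
  | n + 1 => by
    show HasMean (M (Pn n (Gseq n))) 0
    refine ⟨fun _ => ?_, fun _ => ?_⟩
    · simp [HasMean]
    · rw [show (0:ℤ) - 1 = -1 from by norm_num]
      exact hasMean_Pn (hasMean_Gseq n) n

end PoGame
namespace PoGame

open SetTheory
open scoped SetTheory.PGame

/-- The key invariant: `G ≤ H` forces mean `G` ≤ mean `H` (with `np G ≤ np H` in case of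
equality), and `G ⊲ H` forces mean `G` ≤ mean `H` + 1 (with `np G ⧏ np H` in the extreme
case). Proved by the mutual recursor for `Le`/`Lf`. -/
theorem lf_mean {G H : PoGame L5} (h : Lf G H) :
    ∀ C D : ℤ, HasMean G C → HasMean H D → C ≤ D + 1 ∧ (C = D + 1 → np G ⧏ np H) := by
  refine Lf.rec
    (motive_1 := fun G H _ => ∀ C D : ℤ, HasMean G C → HasMean H D →
      C ≤ D ∧ (C = D → np G ≤ np H))
    (motive_2 := fun G H _ => ∀ C D : ℤ, HasMean G C → HasMean H D →
      C ≤ D + 1 ∧ (C = D + 1 → np G ⧏ np H))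
    ?_ ?_ ?_ ?_ h
  · -- Le.intro
    intro G H hL hR hA ihL ihR ihA C D hGC hHD
    cases G with
    | atom a =>
      cases H with
      | atom b =>
        have hab : (a : ℤ) ≤ b := lf_atom_atom (hA (Or.inl trivial))
        simp only [HasMean] at hGC hHD
        refine ⟨by omega, fun _ => ?_⟩
        exact le_refl (0 : PGame)
      | mk yl yr L R hy1 hy2 =>
        obtain ⟨j⟩ := hy2
        have h1 := ihR (R j) ⟨j, rfl⟩ C (D - 1) hGC (hHD.2 j)
        refine ⟨by omega, fun hCD => ?_⟩
        rw [PGame.le_iff_forall_lf]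
        refine ⟨fun i => PEmpty.elim i, fun j' => ?_⟩
        exact (ihR (R j') ⟨j', rfl⟩ C (D - 1) hGC (hHD.2 j')).2 (by omega)
    | mk xl xr L R hx1 hx2 =>
      obtain ⟨i0⟩ := hx1
      have h1 := ihL (L i0) ⟨i0, rfl⟩ (C + 1) D (hGC.1 i0) hHD
      cases H with
      | atom b =>
        refine ⟨by omega, fun hCD => ?_⟩
        rw [PGame.le_iff_forall_lf]
        refine ⟨fun i => ?_, fun j => PEmpty.elim j⟩
        exact (ihL (L i) ⟨i, rfl⟩ (C + 1) D (hGC.1 i) hHD).2 (by omega)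
      | mk yl yr L' R' hy1 hy2 =>
        refine ⟨by omega, fun hCD => ?_⟩
        rw [PGame.le_iff_forall_lf]
        refine ⟨fun i => ?_, fun j => ?_⟩
        · exact (ihL (L i) ⟨i, rfl⟩ (C + 1) D (hGC.1 i) hHD).2 (by omega)
        · exact (ihR (R' j) ⟨j, rfl⟩ C (D - 1) hGC (hHD.2 j)).2 (by omega)
  · -- Lf.rightOption
    intro G H G' hro hle ih C D hGC hHD
    cases G with
    | atom a => exact False.elim hro
    | mk xl xr L R hx1 hx2 =>
      obtain ⟨j, rfl⟩ := hro
      have h3 := ih (C - 1) D (hGC.2 j) hHD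
      refine ⟨by omega, fun hC => ?_⟩
      rw [PGame.lf_iff_exists_le]
      exact Or.inr ⟨j, h3.2 (by omega)⟩
  · -- Lf.leftOption
    intro G H H' hlo hle ih C D hGC hHD
    cases H with
    | atom b => exact False.elim hlo
    | mk yl yr L R hy1 hy2 =>
      obtain ⟨i, rfl⟩ := hlo
      have h3 := ih C (D + 1) hGC (hHD.1 i)
      refine ⟨h3.1, fun hC => ?_⟩
      rw [PGame.lf_iff_exists_le]
      exact Or.inl ⟨i, h3.2 hC⟩
  · -- Lf.atom
    intro a b hab C D hGC hHD
    simp only [HasMean] at hGC hHD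
    have : (a : ℤ) ≤ b := hab
    exact ⟨by omega, fun h => absurd h (by omega)⟩

end PoGame
namespace PoGame

open SetTheory
open scoped SetTheory.PGame

/-- `np star` as an explicit `PGame`. -/
noncomputable def sg : PGame := PGame.mk PUnit PUnit (fun _ => 0) (fun _ => 0)

theorem np_star : np star = sg := by
  simp only [star, ofPair, np, sg]

theorem np_Pn (n : ℕ) (G : PoGame L5) :
    np (Pn n G) = PGame.mk PUnit PUnit (fun _ => np G)
      (fun _ => if Odd n then 0 else sg) := by
  by_cases h : Odd n
  · rw [show Pn n G = P G from if_pos h, if_pos h]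
    simp only [P, ofPair, np]
  · rw [show Pn n G = Pstar G from if_neg h, if_neg h]
    simp only [Pstar, ofPair, np, ← np_star]

theorem np_Gseq_succ (n : ℕ) :
    np (Gseq (n + 1)) = PGame.mk PUnit PUnit (fun _ => 0)
      (fun _ => np (Pn n (Gseq n))) := by
  simp only [Gseq, M, ofPair, np]

theorem np_Gseq_zero : np (Gseq 0) = 0 := by
  simp only [Gseq, np]

theorem zero_lf_sg : (0 : PGame) ⧏ sg := by
  rw [PGame.lf_iff_exists_le]
  exact Or.inl ⟨PUnit.unit, le_refl 0⟩

theorem sg_lf_zero : sg ⧏ (0 : PGame) := by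
  rw [PGame.lf_iff_exists_le]
  exact Or.inr ⟨PUnit.unit, le_refl 0⟩

theorem zero_le_npG : ∀ n, (0 : PGame) ≤ np (Gseq n)
  | 0 => by rw [np_Gseq_zero]
  | n + 1 => by
    rw [np_Gseq_succ, PGame.zero_le_lf]
    intro j
    rw [PGame.moveRight_mk, np_Pn, PGame.lf_iff_exists_le]
    exact Or.inl ⟨PUnit.unit, zero_le_npG n⟩

theorem np_Pn_lf_succ (n : ℕ) :
    np (Pn n (Gseq n)) ⧏ np (Pn (n + 1) (Gseq (n + 1))) := by
  rw [np_Pn, np_Pn, PGame.lf_iff_exists_le]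
  refine Or.inr ⟨PUnit.unit, ?_⟩
  rw [PGame.moveRight_mk]
  by_cases h : Odd n
  · rw [if_pos h, PGame.zero_le_lf]
    intro j
    rw [PGame.moveRight_mk, if_neg (by simp [Nat.odd_add_one, h])]
    exact zero_lf_sg
  · rw [if_neg h, PGame.le_iff_forall_lf]
    constructor
    · intro i
      show (0 : PGame) ⧏ _
      rw [PGame.lf_iff_exists_le]
      exact Or.inl ⟨PUnit.unit, by rw [PGame.moveLeft_mk]; exact zero_le_npG (n + 1)⟩
    · intro j
      rw [PGame.moveRight_mk, if_pos (by simp [Nat.odd_add_one, h])]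
      exact sg_lf_zero

theorem npG_mono (n : ℕ) : np (Gseq (n + 1)) ≤ np (Gseq (n + 1 + 1)) := by
  rw [np_Gseq_succ, np_Gseq_succ (n + 1), PGame.le_iff_forall_lf]
  constructor
  · intro i
    rw [PGame.moveLeft_mk, PGame.lf_iff_exists_le]
    exact Or.inl ⟨PUnit.unit, le_refl 0⟩
  · intro j
    rw [PGame.moveRight_mk, np_Pn (n + 1), PGame.lf_iff_exists_le]
    refine Or.inl ⟨PUnit.unit, ?_⟩
    rw [PGame.moveLeft_mk, ← np_Gseq_succ]

theorem main_le : ∀ n, np (Pn n (Gseq n)) ≤ np (Gseq (n + 1 + 1))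
  | 0 => by
    rw [np_Pn, np_Gseq_succ (0 + 1), PGame.le_iff_forall_lf]
    constructor
    · intro i
      rw [PGame.moveLeft_mk, np_Gseq_zero, PGame.lf_iff_exists_le]
      exact Or.inl ⟨PUnit.unit, le_refl 0⟩
    · intro j
      rw [PGame.moveRight_mk, ← np_Pn]
      exact np_Pn_lf_succ 0
  | n + 1 => by
    rw [np_Pn, np_Gseq_succ (n + 1 + 1), PGame.le_iff_forall_lf]
    constructor
    · intro i
      rw [PGame.moveLeft_mk, np_Gseq_succ, PGame.lf_iff_exists_le]
      refine Or.inr ⟨PUnit.unit, ?_⟩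
      rw [PGame.moveRight_mk, ← np_Gseq_succ (n + 1 + 1)]
      exact le_trans (main_le n) (npG_mono (n + 1))
    · intro j
      rw [PGame.moveRight_mk, ← np_Pn]
      exact np_Pn_lf_succ (n + 1)

end PoGame

open PoGame in
/-- For every natural number `n ≥ 1`, it is not the case that
`G_{n+1} ⊲ P_{n-1}(G_{n-1})`. -/
theorem stmt_12 (n : ℕ) (hn : 1 ≤ n) :
    ¬ Lf (Gseq (n + 1)) (Pn (n - 1) (Gseq (n - 1))) := by
  obtain ⟨m, rfl⟩ : ∃ m, n = m + 1 := ⟨n - 1, by omega⟩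
  simp only [Nat.add_sub_cancel]
  intro h
  have key := lf_mean h 0 (-1) (hasMean_Gseq (m + 2)) (hasMean_Pn (hasMean_Gseq m) m)
  have hlf := key.2 (by norm_num)
  exact hlf (main_le m)
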